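/- Let n ≥ 1, let x : Fin n → ℤ, let ω be an integer, and let s be the multiset {exp(x(0)), …, exp(x(n−1))} of real numbers. If the singleton multiset {exp(ω)} is reachable from s by a finite sequence of multiplicative Countdown steps (steps using only × and ÷), then there exists a sign assignment ε : Fin n → ℤ with ε(i) ∈ {1, −1} for every i such that ∑_{i} ε(i) · x(i) = ω. -/

import Mathlib

/-- A multiplicative Countdown step: remove two elements `x, y` (occupying
distinct positions) from the multiset and insert `x * y` or `x / y`,
division only by a nonzero number. -/
def MulCountdownStep (s t : Multiset ℝ) : Prop :=
  ∃ (u : Multiset ℝ) (x y r : ℝ), s = x ::ₘ y ::ₘ u ∧ t = r ::ₘ u ∧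
    (r = x * y ∨ (y ≠ 0 ∧ r = x / y))

/-- Reachability by a finite (possibly empty) sequence of multiplicative
Countdown steps. -/
def MulCountdownReach : Multiset ℝ → Multiset ℝ → Prop :=
  Relation.ReflTransGen MulCountdownStep

private noncomputable def expSum {n : ℕ} (x : Fin n → ℤ) (f : Fin n → ℤ) : ℝ :=
  Real.exp ((∑ i, f i * x i : ℤ) : ℝ)

private lemma expSum_add {n : ℕ} (x f g : Fin n → ℤ) :
    expSum x (f + g) = expSum x f * expSum x g := by
  unfold expSum
  rw [← Real.exp_add]
  congr 1
  push_cast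
  rw [← Finset.sum_add_distrib]
  apply Finset.sum_congr rfl
  intro i _
  simp [add_mul]

private lemma expSum_sub {n : ℕ} (x f g : Fin n → ℤ) :
    expSum x (f - g) = expSum x f / expSum x g := by
  unfold expSum
  rw [← Real.exp_sub]
  congr 1
  push_cast
  rw [← Finset.sum_sub_distrib]
  apply Finset.sum_congr rfl
  intro i _
  simp [sub_mul]

private lemma step_inv {n : ℕ} (x : Fin n → ℤ) {s t : Multiset ℝ}
    (hst : MulCountdownStep s t)
    (L : Multiset (Fin n → ℤ))
    (hs : s = L.map (expSum x))
    (hsq : ∀ i, (L.map (fun f => (f i) ^ 2)).sum = 1) :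
    ∃ L' : Multiset (Fin n → ℤ),
      t = L'.map (expSum x) ∧
      ∀ i, (L'.map (fun f => (f i) ^ 2)).sum = 1 := by
  obtain ⟨u, a, b, r, hs1, ht, hr⟩ := hst
  rw [hs1] at hs
  obtain ⟨f, hfL, hfa, h1⟩ := (Multiset.map_eq_cons _ _ _ _).mpr hs.symm
  obtain ⟨g, hgL, hgb, h2⟩ := (Multiset.map_eq_cons _ _ _ _).mpr h1
  set L₀ := (L.erase f).erase g with hL₀
  have hLdec : L = f ::ₘ g ::ₘ L₀ := by
    rw [hL₀, Multiset.cons_erase hgL, Multiset.cons_erase hfL]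
  have hcross : ∀ i, f i * g i = 0 := by
    intro i
    have h := hsq i
    rw [hLdec] at h
    simp only [Multiset.map_cons, Multiset.sum_cons] at h
    have hrest : 0 ≤ (L₀.map (fun f => (f i) ^ 2)).sum := by
      apply Multiset.sum_nonneg
      intro z hz
      obtain ⟨w, _, rfl⟩ := Multiset.mem_map.mp hz
      positivity
    by_contra hne
    have hf0 : f i ≠ 0 := fun h0 => hne (by simp [h0])
    have hg0 : g i ≠ 0 := fun h0 => hne (by simp [h0])
    have h1' : 1 ≤ (f i) ^ 2 := by
      have h0 : (0:ℤ) < (f i) ^ 2 := by positivity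
      simpa using Int.add_one_le_iff.mpr h0
    have h2' : 1 ≤ (g i) ^ 2 := by
      have h0 : (0:ℤ) < (g i) ^ 2 := by positivity
      simpa using Int.add_one_le_iff.mpr h0
    linarith
  have hsum2 : ∀ i, (f i) ^ 2 + (g i) ^ 2 + (L₀.map (fun f => (f i) ^ 2)).sum = 1 := by
    intro i
    have h := hsq i
    rw [hLdec] at h
    simp only [Multiset.map_cons, Multiset.sum_cons] at h
    linarith
  have key : ∀ h : Fin n → ℤ, (∀ i, (h i) ^ 2 = (f i) ^ 2 + (g i) ^ 2) →
      expSum x h = r →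
      ∃ L' : Multiset (Fin n → ℤ), t = L'.map (expSum x) ∧
        ∀ i, (L'.map (fun f => (f i) ^ 2)).sum = 1 := by
    intro h hh hval
    refine ⟨h ::ₘ L₀, ?_, ?_⟩
    · rw [ht, Multiset.map_cons, h2, hval]
    · intro i
      simp only [Multiset.map_cons, Multiset.sum_cons, hh i]
      have := hsum2 i
      linarith
  rcases hr with hr | ⟨_, hr⟩
  · refine key (f + g) ?_ ?_
    · intro i
      have := hcross i
      simp only [Pi.add_apply]
      ring_nf
      nlinarith [hcross i]
    · rw [expSum_add, hfa, hgb, hr]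
  · refine key (f - g) ?_ ?_
    · intro i
      simp only [Pi.sub_apply]
      nlinarith [hcross i]
    · rw [expSum_sub, hfa, hgb, hr]

theorem mul_countdown_reach_target_signs (n : ℕ) (hn : 1 ≤ n)
    (x : Fin n → ℤ) (ω : ℤ)
    (h : MulCountdownReach
      (Multiset.map (fun i => Real.exp ((x i : ℤ) : ℝ)) Finset.univ.val)
      {Real.exp ((ω : ℤ) : ℝ)}) :
    ∃ ε : Fin n → ℤ, (∀ i, ε i = 1 ∨ ε i = -1) ∧ ∑ i, ε i * x i = ω := by
  have key : ∀ t, MulCountdownReach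
      (Multiset.map (fun i => Real.exp ((x i : ℤ) : ℝ)) Finset.univ.val) t →
      ∃ L : Multiset (Fin n → ℤ), t = L.map (expSum x) ∧
        ∀ i, (L.map (fun f => (f i) ^ 2)).sum = 1 := by
    intro t ht
    induction ht with
    | refl =>
      refine ⟨Finset.univ.val.map (fun j => fun i => if i = j then (1 : ℤ) else 0), ?_, ?_⟩
      · rw [Multiset.map_map]
        apply Multiset.map_congr rfl
        intro j _
        simp only [Function.comp, expSum]
        congr 2
        simp
      · intro i
        rw [Multiset.map_map]
        have : ((Finset.univ.val.map
            ((fun f => (f i) ^ 2) ∘ (fun j => fun i => if i = j then (1 : ℤ) else 0)))).sum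
            = ∑ j, (if i = j then (1 : ℤ) else 0) ^ 2 := rfl
        rw [this]
        simp
    | tail hsteps hstep ih =>
      obtain ⟨L, hL, hsq⟩ := ih
      exact step_inv x hstep L hL hsq
  obtain ⟨L, hL, hsq⟩ := key _ h
  have hcard : L.card = 1 := by
    have := congrArg Multiset.card hL
    simpa using this.symm
  obtain ⟨f, rfl⟩ := Multiset.card_eq_one.mp hcard
  simp only [Multiset.map_singleton, Multiset.singleton_inj] at hL
  refine ⟨f, ?_, ?_⟩
  · intro i
    have h1 := hsq i
    simp only [Multiset.map_singleton, Multiset.sum_singleton] at h1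
    have : f i * f i = 1 := by nlinarith
    exact Int.isUnit_iff.mp (IsUnit.of_mul_eq_one _ this)
  · have : ((∑ i, f i * x i : ℤ) : ℝ) = ((ω : ℤ) : ℝ) :=
      Real.exp_injective hL.symm
    exact_mod_cast this
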